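/- Let 𝔤 = 𝔰𝔩₂(ℤ), let e, f, h be the standard basis (e = E₁₂, f = E₂₁, h = E₁₁ − E₂₂), and let S = {e, f, h}. Define S^1 = {0} ∪ S and S^k = ⋃_{0<j<k} ((S^j + S^{k−j}) ∪ [S^j, S^{k−j}]). Then for every m ∈ ℕ with m ≥ 1, |S^m| ≥ 2^{m/2}; in particular 𝔰𝔩₂(ℤ) exhibits exponential growth with respect to S. -/

import Mathlib

open Matrix

/-- The ball `S^k` in the Lie ring of 2×2 integer matrices (with commutator bracket):
`S^1 = {0} ∪ S`, `S^k = ⋃_{0<j<k} ((S^j + S^{k-j}) ∪ [S^j, S^{k-j}])`. -/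
def ball (S : Set (Matrix (Fin 2) (Fin 2) ℤ)) : ℕ → Set (Matrix (Fin 2) (Fin 2) ℤ)
  | 0 => ∅
  | 1 => insert 0 S
  | (n + 2) =>
      ⋃ (j : ℕ) (_ : 0 < j) (_ : j < n + 2),
        (Set.image2 (· + ·) (ball S j) (ball S (n + 2 - j)) ∪
          Set.image2 (fun x y => ⁅x, y⁆) (ball S j) (ball S (n + 2 - j)))
  termination_by k => k
  decreasing_by all_goals omega

section Aux

variable {S : Set (Matrix (Fin 2) (Fin 2) ℤ)}

lemma mem_ball_add' {n j : ℕ} (h1 : 0 < j) (h2 : j < n + 2) {A B}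
    (hA : A ∈ ball S j) (hB : B ∈ ball S (n + 2 - j)) : A + B ∈ ball S (n + 2) := by
  rw [ball]
  exact Set.mem_iUnion.2 ⟨j, Set.mem_iUnion.2 ⟨h1, Set.mem_iUnion.2
    ⟨h2, Or.inl ⟨A, hA, B, hB, rfl⟩⟩⟩⟩

lemma mem_ball_lie' {n j : ℕ} (h1 : 0 < j) (h2 : j < n + 2) {A B}
    (hA : A ∈ ball S j) (hB : B ∈ ball S (n + 2 - j)) : ⁅A, B⁆ ∈ ball S (n + 2) := by
  rw [ball]
  exact Set.mem_iUnion.2 ⟨j, Set.mem_iUnion.2 ⟨h1, Set.mem_iUnion.2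
    ⟨h2, Or.inr ⟨A, hA, B, hB, rfl⟩⟩⟩⟩

lemma ball_mono_succ' {n : ℕ} (hn : 1 ≤ n) : ball S n ⊆ ball S (n + 1) := by
  intro A hA
  obtain ⟨p, rfl⟩ : ∃ p, n = p + 1 := ⟨n - 1, by omega⟩
  have h0 : (0 : Matrix (Fin 2) (Fin 2) ℤ) ∈ ball S (p + 2 - (p + 1)) := by
    have : p + 2 - (p + 1) = 1 := by omega
    rw [this, ball]; exact Set.mem_insert _ _
  have := mem_ball_add' (n := p) (j := p + 1) (by omega) (by omega) hA h0
  simpa using this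

lemma ball_mono' {a b : ℕ} (ha : 1 ≤ a) (hab : a ≤ b) : ball S a ⊆ ball S b := by
  induction b with
  | zero => omega
  | succ b ih =>
    rcases Nat.lt_or_ge a (b + 1) with h | h
    · exact (ih (by omega)).trans (ball_mono_succ' (by omega))
    · have : a = b + 1 := by omega
      subst this; exact subset_rfl

lemma ball_finite' (hS : S.Finite) : ∀ n, (ball S n).Finite := by
  intro n
  induction n using Nat.strong_induction_on with
  | _ n ih =>
    match n with
    | 0 => rw [ball]; exact Set.finite_empty
    | 1 => rw [ball]; exact hS.insert 0
    | (n + 2) =>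
      rw [ball]
      apply Set.Finite.subset (s := ⋃ j ∈ Set.Icc 1 (n + 1),
        (Set.image2 (· + ·) (ball S j) (ball S (n + 2 - j)) ∪
          Set.image2 (fun x y => ⁅x, y⁆) (ball S j) (ball S (n + 2 - j))))
      · apply Set.Finite.biUnion (Set.finite_Icc 1 (n + 1))
        intro j hj
        rw [Set.mem_Icc] at hj
        exact Set.Finite.union
          (Set.Finite.image2 _ (ih j (by omega)) (ih (n + 2 - j) (by omega)))
          (Set.Finite.image2 _ (ih j (by omega)) (ih (n + 2 - j) (by omega)))
      · intro x hx
        simp only [Set.mem_iUnion, Set.mem_Icc] at hx ⊢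
        obtain ⟨j, hj1, hj2, hx⟩ := hx
        exact ⟨j, ⟨hj1, by omega⟩, hx⟩

end Aux

/-- The concrete generating set. -/
def Sgen : Set (Matrix (Fin 2) (Fin 2) ℤ) :=
  {Matrix.single 0 1 1, Matrix.single 1 0 1,
    Matrix.single 0 0 1 - Matrix.single 1 1 1}

lemma key_lemma : ∀ k : ℕ, 1 ≤ k → ∀ x : ℤ, 0 ≤ x → x < 2 ^ k →
    ∃ A ∈ ball Sgen (2 * k - 1), A 0 1 = x := by
  intro k
  induction k with
  | zero => omega
  | succ k ih =>
    intro _ x hx0 hx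
    rcases Nat.eq_zero_or_pos k with rfl | hk
    · -- base case: 2*1-1 = 1, x ∈ {0, 1}
      interval_cases x
      · exact ⟨0, by rw [show 2 * 1 - 1 = 1 from rfl, ball]; exact Set.mem_insert _ _, rfl⟩
      · refine ⟨Matrix.single 0 1 1, ?_, ?_⟩
        · rw [show 2 * 1 - 1 = 1 from rfl, ball]
          exact Set.mem_insert_of_mem _ (Or.inl rfl)
        · simp [Matrix.single]
    · -- inductive step
      set y := x / 2 with hy
      have hy0 : 0 ≤ y := Int.ediv_nonneg hx0 (by norm_num)
      have hylt : y < 2 ^ k := by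
        have : x < 2 * 2 ^ k := by rw [pow_succ] at hx; linarith
        omega
      obtain ⟨A, hA, hA01⟩ := ih hk y hy0 hylt
      -- H ∈ ball 1
      have hH : (Matrix.single 0 0 1 - Matrix.single 1 1 1 : Matrix (Fin 2) (Fin 2) ℤ)
          ∈ ball Sgen 1 := by
        rw [ball]; exact Set.mem_insert_of_mem _ (Or.inr (Or.inr rfl))
      have hE : (Matrix.single 0 1 1 : Matrix (Fin 2) (Fin 2) ℤ) ∈ ball Sgen 1 := by
        rw [ball]; exact Set.mem_insert_of_mem _ (Or.inl rfl)
      -- ⁅H, A⁆ ∈ ball (2k): 2k = (2k-2)+2, j = 1, rest = 2k-1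
      have h2k : 2 * k = (2 * k - 2) + 2 := by omega
      have hBA : ⁅(Matrix.single 0 0 1 - Matrix.single 1 1 1 : Matrix (Fin 2) (Fin 2) ℤ), A⁆
          ∈ ball Sgen (2 * k) := by
        rw [h2k]
        exact mem_ball_lie' (j := 1) (by omega) (by omega) hH
          (by rwa [show 2 * k - 2 + 2 - 1 = 2 * k - 1 by omega])
      have hBentry : ⁅(Matrix.single 0 0 1 - Matrix.single 1 1 1 : Matrix (Fin 2) (Fin 2) ℤ), A⁆
          0 1 = 2 * y := by
        rw [← hA01]
        simp [Ring.lie_def, Matrix.sub_apply, Matrix.mul_apply, Fin.sum_univ_two,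
          Matrix.single]
        ring
      rcases Int.even_or_odd x with ⟨c, hc⟩ | ⟨c, hc⟩
      · -- x = 2y, lift from ball (2k) to ball (2k+1)
        have hxy : x = 2 * y := by omega
        refine ⟨⁅(Matrix.single 0 0 1 - Matrix.single 1 1 1 : Matrix (Fin 2) (Fin 2) ℤ), A⁆,
          ?_, ?_⟩
        · exact ball_mono' (by omega) (by omega) hBA
        · rw [hBentry, hxy]
      · -- x = 2y + 1: add E
        have hxy : x = 2 * y + 1 := by omega
        have h2k1 : 2 * (k + 1) - 1 = (2 * k - 1) + 2 := by omega
        refine ⟨⁅(Matrix.single 0 0 1 - Matrix.single 1 1 1 : Matrix (Fin 2) (Fin 2) ℤ), A⁆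
          + Matrix.single 0 1 1, ?_, ?_⟩
        · rw [h2k1]
          exact mem_ball_add' (j := 2 * k) (by omega) (by omega) hBA
            (by rwa [show (2 * k - 1) + 2 - (2 * k) = 1 by omega])
        · rw [Matrix.add_apply, hBentry, hxy]
          simp [Matrix.single]

/-- For `S = {e, f, h} ⊆ 𝔰𝔩₂(ℤ)` (the standard generators `e = E₁₂`, `f = E₂₁`,
`h = E₁₁ - E₂₂`), we have `|S^m| ≥ 2^{m/2}` for every `m ≥ 1`. -/
theorem stmt4 (m : ℕ) (hm : 1 ≤ m) :
    (2 : ℝ) ^ ((m : ℝ) / 2) ≤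
      ((ball {Matrix.single 0 1 1, Matrix.single 1 0 1,
        Matrix.single 0 0 1 - Matrix.single 1 1 1} m).ncard : ℝ) := by
  show (2 : ℝ) ^ ((m : ℝ) / 2) ≤ ((ball Sgen m).ncard : ℝ)
  obtain ⟨k, hk1, hkm, hkm2⟩ : ∃ k, 1 ≤ k ∧ 2 * k - 1 ≤ m ∧ m ≤ 2 * k :=
    ⟨(m + 1) / 2, by omega, by omega, by omega⟩
  have hSfin : Sgen.Finite :=
    ((Set.finite_singleton _).insert _).insert _
  have hfin : (ball Sgen m).Finite := ball_finite' hSfin m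
  -- the image of φ contains Ico 0 (2^k)
  have hsub : (Set.Ico (0 : ℤ) (2 ^ k)) ⊆ (fun A => A 0 1) '' ball Sgen m := by
    intro x hx
    rw [Set.mem_Ico] at hx
    obtain ⟨A, hA, hA01⟩ := key_lemma k hk1 x hx.1 hx.2
    exact ⟨A, ball_mono' (by omega) hkm hA, hA01⟩
  have hcard : 2 ^ k ≤ (ball Sgen m).ncard := by
    have h1 : (Set.Ico (0 : ℤ) (2 ^ k)).ncard ≤ ((fun A => A 0 1) '' ball Sgen m).ncard :=
      Set.ncard_le_ncard hsub (hfin.image _)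
    have h2 : ((fun A => A 0 1) '' ball Sgen m).ncard ≤ (ball Sgen m).ncard :=
      Set.ncard_image_le hfin
    have h3 : (Set.Ico (0 : ℤ) (2 ^ k)).ncard = 2 ^ k := by
      rw [← Finset.coe_Ico, Set.ncard_coe_finset, Int.card_Ico]
      have h4 := Int.toNat_of_nonneg (pow_nonneg (by norm_num : (0:ℤ) ≤ 2) k)
      rw [show (2:ℤ)^k - 0 = 2^k by ring]
      exact_mod_cast h4
    exact h3 ▸ (h1.trans h2)
  have hgoal : (2 : ℝ) ^ ((m : ℝ) / 2) ≤ (2 : ℝ) ^ (k : ℕ) := by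
    rw [← Real.rpow_natCast 2 k]
    apply Real.rpow_le_rpow_of_exponent_le (by norm_num)
    have : (m : ℝ) ≤ 2 * k := by exact_mod_cast (by omega : m ≤ 2 * k)
    linarith
  calc (2 : ℝ) ^ ((m : ℝ) / 2) ≤ (2 : ℝ) ^ (k : ℕ) := hgoal
    _ ≤ ((ball Sgen m).ncard : ℝ) := by exact_mod_cast hcard
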